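/- There exists an absolute constant c > 0 such that the following holds. Let k, L be integers with 2 ≤ L < k and L dividing k, let ε ∈ (0,1], and let p be a distribution on [k]. Let f be a uniformly random balanced L-coloring of [k] and let q be the induced distribution on [L] given by q_r = ∑_{i : f(i)=r} p_i. Then: (i) if p = u_k, then q = u_L with probability 1; and (ii) if ∑_{i=1}^k |p_i − 1/k| > ε, then P( ∑_{r=1}^L (q_r − 1/L)² > ε²/(4k) ) ≥ c. -/

import Mathlib

open scoped BigOperators Classical

/-- The finite set of balanced `L`-colorings of `[k]`: functions `Fin k → Fin L` each of
whose fibers has exactly `k / L` elements. -/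
noncomputable def balancedColorings (k L : ℕ) : Finset (Fin k → Fin L) :=
  Finset.univ.filter fun f =>
    ∀ r : Fin L, (Finset.univ.filter fun i => f i = r).card = k / L

/-- For a coloring `f` and weights `p`, `partSum p f r = ∑_{i : f i = r} p_i`:
the induced distribution on `[L]`. -/
noncomputable def partSum {k L : ℕ} (p : Fin k → ℝ) (f : Fin k → Fin L) (r : Fin L) : ℝ :=
  ∑ i ∈ Finset.univ.filter (fun i => f i = r), p i

namespace RFPD

open Finset Function

variable {k L : ℕ}

/-- The 0/1 indicator that `f` gives `i` and `j` the same color. -/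
noncomputable def Yb (f : Fin k → Fin L) (i j : Fin k) : ℝ := if f i = f j then 1 else 0

lemma Yb_nonneg (f : Fin k → Fin L) (i j : Fin k) : 0 ≤ Yb f i j := by
  unfold Yb; split_ifs <;> norm_num

lemma Yb_le_one (f : Fin k → Fin L) (i j : Fin k) : Yb f i j ≤ 1 := by
  unfold Yb; split_ifs <;> norm_num

lemma Yb_self (f : Fin k → Fin L) (i : Fin k) : Yb f i i = 1 := by simp [Yb]

lemma Yb_symm (f : Fin k → Fin L) (i j : Fin k) : Yb f i j = Yb f j i := by
  unfold Yb
  by_cases h : f i = f j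
  · rw [if_pos h, if_pos h.symm]
  · rw [if_neg h, if_neg (fun hh : f j = f i => h hh.symm)]

lemma Yb_mul_self (f : Fin k → Fin L) (i j : Fin k) : Yb f i j * Yb f i j = Yb f i j := by
  unfold Yb; split_ifs <;> norm_num

lemma mem_balanced_iff {f : Fin k → Fin L} :
    f ∈ balancedColorings k L ↔ ∀ r : Fin L, (Finset.univ.filter fun i => f i = r).card = k / L := by
  simp [balancedColorings]

lemma perm_mem (σ : Equiv.Perm (Fin k)) {f : Fin k → Fin L} (hf : f ∈ balancedColorings k L) :
    (f ∘ σ) ∈ balancedColorings k L := by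
  rw [mem_balanced_iff] at hf ⊢
  intro r
  rw [← hf r]
  apply Finset.card_nbij' (fun i => σ i) (fun i => σ.symm i)
  · intro a ha; simp only [Finset.mem_coe, mem_filter, mem_univ, true_and, comp_apply] at ha ⊢; exact ha
  · intro a ha; simp only [mem_filter, mem_univ, true_and, comp_apply] at ha ⊢
    simpa using ha
  · intro a _; simp
  · intro a _; simp

lemma sum_perm (σ : Equiv.Perm (Fin k)) (G : (Fin k → Fin L) → ℝ) :
    ∑ f ∈ balancedColorings k L, G (f ∘ σ) = ∑ f ∈ balancedColorings k L, G f := by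
  apply Finset.sum_nbij' (fun f => f ∘ σ) (fun f => f ∘ σ.symm)
  · intro f hf; exact perm_mem σ hf
  · intro f hf; exact perm_mem σ.symm hf
  · intro f _; funext x; simp
  · intro f _; funext x; simp
  · intro f _; rfl

lemma exists_perm {t : ℕ} (u v : Fin t → Fin k) (hu : Function.Injective u)
    (hv : Function.Injective v) : ∃ σ : Equiv.Perm (Fin k), ∀ x, σ (u x) = v x := by
  have hcard : Fintype.card ((Set.range u)ᶜ : Set (Fin k)) =
      Fintype.card ((Set.range v)ᶜ : Set (Fin k)) := by
    rw [Fintype.card_compl_set, Fintype.card_compl_set,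
      Set.card_range_of_injective hu, Set.card_range_of_injective hv]
  obtain ⟨e1⟩ := Fintype.card_eq.mp hcard
  set e0 : (Set.range u) ≃ (Set.range v) :=
    (Equiv.ofInjective u hu).symm.trans (Equiv.ofInjective v hv) with he0
  obtain ⟨σ, hσ⟩ := (Equiv.Set.compl e0).symm e1
  refine ⟨σ, fun x => ?_⟩
  have h1 := hσ ⟨u x, Set.mem_range_self x⟩
  have h2 : e0 ⟨u x, Set.mem_range_self x⟩ = ⟨v x, Set.mem_range_self x⟩ := by
    rw [he0]
    simp only [Equiv.trans_apply]
    have : (⟨u x, Set.mem_range_self x⟩ : Set.range u) = Equiv.ofInjective u hu x := by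
      simp [Equiv.ofInjective_apply]
    rw [this, Equiv.symm_apply_apply]
    rfl
  rw [h2] at h1
  exact h1

/-- `E4 i j a b = ∑_f Y_{ij} Y_{ab}`. -/
noncomputable def E4 (k L : ℕ) (i j a b : Fin k) : ℝ :=
  ∑ f ∈ balancedColorings k L, Yb f i j * Yb f a b

/-- `E2 i j = ∑_f Y_{ij}`. -/
noncomputable def E2 (k L : ℕ) (i j : Fin k) : ℝ :=
  ∑ f ∈ balancedColorings k L, Yb f i j

lemma E2_nonneg (i j : Fin k) : 0 ≤ E2 k L i j :=
  Finset.sum_nonneg fun f _ => Yb_nonneg f i j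

lemma E2_le (i j : Fin k) : E2 k L i j ≤ ((balancedColorings k L).card : ℝ) := by
  calc E2 k L i j ≤ ∑ f ∈ balancedColorings k L, (1 : ℝ) :=
        Finset.sum_le_sum fun f _ => Yb_le_one f i j
    _ = _ := by simp

lemma E4_nonneg (i j a b : Fin k) : 0 ≤ E4 k L i j a b :=
  Finset.sum_nonneg fun f _ => mul_nonneg (Yb_nonneg f i j) (Yb_nonneg f a b)

lemma E4_le (i j a b : Fin k) : E4 k L i j a b ≤ ((balancedColorings k L).card : ℝ) := by
  calc E4 k L i j a b ≤ ∑ f ∈ balancedColorings k L, (1 : ℝ) := by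
        refine Finset.sum_le_sum fun f _ => ?_
        calc Yb f i j * Yb f a b ≤ 1 * 1 :=
              mul_le_mul (Yb_le_one f i j) (Yb_le_one f a b) (Yb_nonneg f a b) zero_le_one
          _ = 1 := by norm_num
    _ = _ := by simp

lemma inj2 {a b : Fin k} (h : a ≠ b) : Function.Injective ![a, b] := by
  intro x y hxy; fin_cases x <;> fin_cases y <;> simp_all

lemma inj3 {a b c : Fin k} (hab : a ≠ b) (hac : a ≠ c) (hbc : b ≠ c) :
    Function.Injective ![a, b, c] := by
  intro x y hxy; fin_cases x <;> fin_cases y <;> simp_all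

lemma inj4 {a b c e : Fin k} (hab : a ≠ b) (hac : a ≠ c) (hae : a ≠ e) (hbc : b ≠ c)
    (hbe : b ≠ e) (hce : c ≠ e) : Function.Injective ![a, b, c, e] := by
  intro x y hxy; fin_cases x <;> fin_cases y <;> simp_all

lemma E2_const {i j i' j' : Fin k} (h : i ≠ j) (h' : i' ≠ j') :
    E2 k L i j = E2 k L i' j' := by
  obtain ⟨σ, hσ⟩ := exists_perm ![i', j'] ![i, j] (inj2 h') (inj2 h)
  have h0 := hσ 0
  have h1 := hσ 1
  simp only [Matrix.cons_val_zero, Matrix.cons_val_one, Matrix.head_cons] at h0 h1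
  calc E2 k L i j = ∑ f ∈ balancedColorings k L, Yb (f ∘ σ) i' j' := by
        refine Finset.sum_congr rfl fun f _ => ?_
        simp [Yb, comp_apply, h0, h1]
    _ = E2 k L i' j' := sum_perm σ (fun g => Yb g i' j')

lemma E3_const {x y z x' y' z' : Fin k} (hxy : x ≠ y) (hxz : x ≠ z) (hyz : y ≠ z)
    (hxy' : x' ≠ y') (hxz' : x' ≠ z') (hyz' : y' ≠ z') :
    E4 k L x y x z = E4 k L x' y' x' z' := by
  obtain ⟨σ, hσ⟩ := exists_perm ![x', y', z'] ![x, y, z] (inj3 hxy' hxz' hyz')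
    (inj3 hxy hxz hyz)
  have h0 := hσ 0
  have h1 := hσ 1
  have h2 := hσ 2
  simp only [Matrix.cons_val_zero, Matrix.cons_val_one, Matrix.head_cons,
    Matrix.cons_val_two, Matrix.tail_cons] at h0 h1 h2
  calc E4 k L x y x z
      = ∑ f ∈ balancedColorings k L, Yb (f ∘ σ) x' y' * Yb (f ∘ σ) x' z' := by
        refine Finset.sum_congr rfl fun f _ => ?_
        simp [Yb, comp_apply, h0, h1, h2]
    _ = E4 k L x' y' x' z' := sum_perm σ (fun g => Yb g x' y' * Yb g x' z')

lemma E4_const {i j a b i' j' a' b' : Fin k}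
    (h1 : i ≠ j) (h2 : i ≠ a) (h3 : i ≠ b) (h4 : j ≠ a) (h5 : j ≠ b) (h6 : a ≠ b)
    (h1' : i' ≠ j') (h2' : i' ≠ a') (h3' : i' ≠ b') (h4' : j' ≠ a') (h5' : j' ≠ b')
    (h6' : a' ≠ b') :
    E4 k L i j a b = E4 k L i' j' a' b' := by
  obtain ⟨σ, hσ⟩ := exists_perm ![i', j', a', b'] ![i, j, a, b]
    (inj4 h1' h2' h3' h4' h5' h6') (inj4 h1 h2 h3 h4 h5 h6)
  have h0 := hσ 0
  have hh1 := hσ 1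
  have hh2 := hσ 2
  have hh3 := hσ 3
  simp only [Matrix.cons_val_zero, Matrix.cons_val_one, Matrix.head_cons,
    Matrix.cons_val_two, Matrix.tail_cons, Matrix.cons_val_three] at h0 hh1 hh2 hh3
  calc E4 k L i j a b
      = ∑ f ∈ balancedColorings k L, Yb (f ∘ σ) i' j' * Yb (f ∘ σ) a' b' := by
        refine Finset.sum_congr rfl fun f _ => ?_
        simp [Yb, comp_apply, h0, hh1, hh2, hh3]
    _ = E4 k L i' j' a' b' := sum_perm σ (fun g => Yb g i' j' * Yb g a' b')

lemma E2_diag (i : Fin k) : E2 k L i i = ((balancedColorings k L).card : ℝ) := by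
  unfold E2
  rw [Finset.sum_congr rfl fun f _ => Yb_self f i]
  simp

lemma E4_aa (i j a : Fin k) : E4 k L i j a a = E2 k L i j := by
  unfold E4 E2
  refine Finset.sum_congr rfl fun f _ => ?_
  rw [Yb_self, mul_one]

lemma E4_left_diag (i a b : Fin k) : E4 k L i i a b = E2 k L a b := by
  unfold E4 E2
  refine Finset.sum_congr rfl fun f _ => ?_
  rw [Yb_self, one_mul]

lemma E4_pair (i j : Fin k) : E4 k L i j i j = E2 k L i j := by
  unfold E4 E2
  refine Finset.sum_congr rfl fun f _ => Yb_mul_self f i j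

lemma E4_pair' (i j : Fin k) : E4 k L i j j i = E2 k L i j := by
  unfold E4 E2
  refine Finset.sum_congr rfl fun f _ => ?_
  rw [Yb_symm f j i]
  exact Yb_mul_self f i j

lemma E4_symm_left (i j a b : Fin k) : E4 k L i j a b = E4 k L j i a b := by
  unfold E4
  exact Finset.sum_congr rfl fun f _ => by rw [Yb_symm f i j]

lemma E4_symm_right (i j a b : Fin k) : E4 k L i j a b = E4 k L i j b a := by
  unfold E4
  exact Finset.sum_congr rfl fun f _ => by rw [Yb_symm f a b]

lemma sum_erase_sub (s : Finset (Fin k)) {a : Fin k} (ha : a ∈ s) (g : Fin k → ℝ) :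
    ∑ x ∈ s.erase a, g x = (∑ x ∈ s, g x) - g a := by
  have := Finset.add_sum_erase s g ha
  linarith

lemma row_sum {f : Fin k → Fin L} (hf : f ∈ balancedColorings k L) (i : Fin k) :
    ∑ j, Yb f i j = ((k / L : ℕ) : ℝ) := by
  unfold Yb
  rw [Finset.sum_boole]
  congr 1
  rw [Finset.filter_congr (fun j _ => by rw [eq_comm])]
  exact mem_balanced_iff.mp hf (f i)

lemma balanced_nonempty (hL : 0 < L) (hdvd : L ∣ k) : (balancedColorings k L).Nonempty := by
  obtain ⟨m, hm⟩ := hdvd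
  have hk : k = m * L := by rw [hm, Nat.mul_comm]
  let E : Fin k ≃ Fin m × Fin L := (finCongr hk).trans finProdFinEquiv.symm
  refine ⟨fun i => (E i).2, ?_⟩
  rw [mem_balanced_iff]
  intro r
  have hmL : k / L = m := by rw [hm]; exact Nat.mul_div_cancel_left m hL
  rw [hmL]
  have hc : (Finset.univ.filter fun i => (E i).2 = r).card = (Finset.univ : Finset (Fin m)).card := by
    refine Finset.card_nbij' (fun i => (E i).1) (fun x => E.symm (x, r)) ?_ ?_ ?_ ?_
    · intro a _; exact Finset.mem_univ _
    · intro x _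
      simp only [Finset.mem_coe, Finset.mem_filter, Finset.mem_univ, true_and, Equiv.apply_symm_apply]
    · intro a ha
      simp only [Finset.mem_coe, Finset.mem_filter, Finset.mem_univ, true_and] at ha
      show E.symm ((E a).1, r) = a
      have h2 : ((E a).1, r) = E a := by rw [← ha]
      rw [h2, Equiv.symm_apply_apply]
    · intro x _
      simp only [Equiv.apply_symm_apply]
  simpa using hc

lemma n2_le_half (hL : 2 ≤ L) (hLk : L < k) (hdvd : L ∣ k) {i0 j0 : Fin k} (h : i0 ≠ j0) :
    2 * E2 k L i0 j0 ≤ ((balancedColorings k L).card : ℝ) := by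
  set m := k / L with hm
  have hmk : m * L = k := Nat.div_mul_cancel hdvd
  have hm2 : 2 ≤ m := by
    by_contra hc
    push_neg at hc
    interval_cases m <;> omega
  have hcard : ((Finset.univ : Finset (Fin k)).erase i0).card = k - 1 := by
    rw [Finset.card_erase_of_mem (Finset.mem_univ i0), Finset.card_univ, Fintype.card_fin]
  have hfix : ∀ f ∈ balancedColorings k L, ∑ j ∈ Finset.univ.erase i0, Yb f i0 j = (m : ℝ) - 1 := by
    intro f hf
    rw [sum_erase_sub _ (Finset.mem_univ i0), row_sum hf, Yb_self]
  have key : ((k : ℝ) - 1) * E2 k L i0 j0 = ((balancedColorings k L).card : ℝ) * ((m : ℝ) - 1) := by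
    have h1 : ∑ j ∈ Finset.univ.erase i0, E2 k L i0 j = ((k : ℝ) - 1) * E2 k L i0 j0 := by
      rw [Finset.sum_congr rfl fun j hj => E2_const (Ne.symm (Finset.ne_of_mem_erase hj)) h]
      rw [Finset.sum_const, hcard, nsmul_eq_mul]
      congr 1
      have : (1 : ℕ) ≤ k := by omega
      push_cast [Nat.cast_sub this]
      ring
    have h2 : ∑ j ∈ Finset.univ.erase i0, E2 k L i0 j
        = ∑ f ∈ balancedColorings k L, ∑ j ∈ Finset.univ.erase i0, Yb f i0 j := by
      unfold E2
      exact Finset.sum_comm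
    rw [← h1, h2, Finset.sum_congr rfl hfix, Finset.sum_const, nsmul_eq_mul]
  have hk1 : (1 : ℝ) ≤ (k : ℝ) := by exact_mod_cast Nat.one_le_iff_ne_zero.mpr (by omega)
  have hm1 : (2 : ℝ) ≤ (m : ℝ) := by exact_mod_cast hm2
  have hk2m : 2 * (m : ℝ) ≤ (k : ℝ) := by
    have : 2 * m ≤ k := by
      calc 2 * m ≤ L * m := Nat.mul_le_mul_right m hL
        _ = k := by rw [Nat.mul_comm]; exact hmk
    exact_mod_cast this
  have hE2n : 0 ≤ E2 k L i0 j0 := E2_nonneg i0 j0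
  have hNn : (0 : ℝ) ≤ ((balancedColorings k L).card : ℝ) := Nat.cast_nonneg _
  nlinarith [key]

lemma sum_E2_eval (d : Fin k → ℝ) (hd0 : ∑ i, d i = 0) {i0 j0 : Fin k} (hij : i0 ≠ j0) :
    ∑ i, ∑ j, d i * d j * E2 k L i j
      = (((balancedColorings k L).card : ℝ) - E2 k L i0 j0) * ∑ i, d i ^ 2 := by
  set N : ℝ := ((balancedColorings k L).card : ℝ) with hN
  set n2 : ℝ := E2 k L i0 j0 with hn2
  have herase : ∀ i : Fin k, ∑ j ∈ Finset.univ.erase i, d j = 0 - d i := by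
    intro i
    rw [sum_erase_sub _ (Finset.mem_univ i), hd0]
  have step : ∀ i : Fin k, ∑ j, d i * d j * E2 k L i j = d i * d i * N + (d i * n2) * (0 - d i) := by
    intro i
    rw [← Finset.add_sum_erase _ _ (Finset.mem_univ i), E2_diag]
    congr 1
    rw [Finset.sum_congr rfl fun j hj =>
      (by rw [E2_const (Ne.symm (Finset.ne_of_mem_erase hj)) hij] :
        d i * d j * E2 k L i j = d i * d j * n2)]
    rw [Finset.sum_congr rfl fun j _ => (by ring : d i * d j * n2 = (d i * n2) * d j),
      ← Finset.mul_sum, herase]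
  rw [Finset.sum_congr rfl fun i _ => step i]
  rw [Finset.sum_congr rfl fun i _ => (by ring :
    d i * d i * N + (d i * n2) * (0 - d i) = (N - n2) * d i ^ 2), ← Finset.mul_sum]

lemma first_moment (hL : 2 ≤ L) (hLk : L < k) (hdvd : L ∣ k)
    (d : Fin k → ℝ) (hd0 : ∑ i, d i = 0) :
    ((balancedColorings k L).card : ℝ) * (∑ i, d i ^ 2) / 2
      ≤ ∑ f ∈ balancedColorings k L, ∑ i, ∑ j, d i * d j * Yb f i j := by
  have hk2 : 2 ≤ k := by omega
  set i0 : Fin k := ⟨0, by omega⟩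
  set j0 : Fin k := ⟨1, by omega⟩
  have hij : i0 ≠ j0 := by simp [i0, j0, Fin.ext_iff]
  have hswap : ∑ f ∈ balancedColorings k L, ∑ i, ∑ j, d i * d j * Yb f i j
      = ∑ i, ∑ j, d i * d j * E2 k L i j := by
    rw [Finset.sum_comm]
    refine Finset.sum_congr rfl fun i _ => ?_
    rw [Finset.sum_comm]
    refine Finset.sum_congr rfl fun j _ => ?_
    unfold E2
    rw [Finset.mul_sum]
  rw [hswap, sum_E2_eval d hd0 hij]
  have h1 := n2_le_half hL hLk hdvd hij
  have h2 : (0 : ℝ) ≤ ∑ i, d i ^ 2 := Finset.sum_nonneg fun i _ => sq_nonneg _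
  nlinarith [h1, h2]

set_option maxHeartbeats 1600000 in
lemma second_moment (hL : 2 ≤ L) (hLk : L < k) (hdvd : L ∣ k)
    (d : Fin k → ℝ) (hd0 : ∑ i, d i = 0) :
    ∑ f ∈ balancedColorings k L, (∑ i, ∑ j, d i * d j * Yb f i j) ^ 2
      ≤ 8 * ((balancedColorings k L).card : ℝ) * (∑ i, d i ^ 2) ^ 2 := by
  classical
  obtain ⟨m, hmeq⟩ := hdvd
  have hm2' : 2 ≤ m := by
    rcases Nat.lt_or_ge m 2 with hc | hc
    · interval_cases m <;> omega
    · exact hc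
  have hk4 : 4 ≤ k := by
    have h4 : 2 * 2 ≤ L * m := Nat.mul_le_mul hL hm2'
    omega
  set z0 : Fin k := ⟨0, by omega⟩ with hz0
  set z1 : Fin k := ⟨1, by omega⟩ with hz1
  set z2 : Fin k := ⟨2, by omega⟩ with hz2
  set z3 : Fin k := ⟨3, by omega⟩ with hz3
  have h01 : z0 ≠ z1 := by simp [hz0, hz1, Fin.ext_iff]
  have h02 : z0 ≠ z2 := by simp [hz0, hz2, Fin.ext_iff]
  have h03 : z0 ≠ z3 := by simp [hz0, hz3, Fin.ext_iff]
  have h12 : z1 ≠ z2 := by simp [hz1, hz2, Fin.ext_iff]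
  have h13 : z1 ≠ z3 := by simp [hz1, hz3, Fin.ext_iff]
  have h23 : z2 ≠ z3 := by simp [hz2, hz3, Fin.ext_iff]
  obtain ⟨N, hN⟩ : ∃ x : ℝ, ((balancedColorings k L).card : ℝ) = x := ⟨_, rfl⟩
  obtain ⟨n2, hn2def⟩ : ∃ x : ℝ, E2 k L z0 z1 = x := ⟨_, rfl⟩
  obtain ⟨E3c, hE3def⟩ : ∃ x : ℝ, E4 k L z0 z1 z0 z2 = x := ⟨_, rfl⟩
  obtain ⟨e0, he0def⟩ : ∃ x : ℝ, E4 k L z0 z1 z2 z3 = x := ⟨_, rfl⟩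
  obtain ⟨D, hD⟩ : ∃ x : ℝ, ∑ i, d i ^ 2 = x := ⟨_, rfl⟩
  obtain ⟨p3, hp3⟩ : ∃ x : ℝ, ∑ i, d i ^ 3 = x := ⟨_, rfl⟩
  obtain ⟨p4, hp4⟩ : ∃ x : ℝ, ∑ i, d i ^ 4 = x := ⟨_, rfl⟩
  rw [hN, hD]
  have hE2c : ∀ i j : Fin k, i ≠ j → E2 k L i j = n2 := fun i j h =>
    (E2_const h h01).trans hn2def
  have hE3 : ∀ x y z : Fin k, x ≠ y → x ≠ z → y ≠ z → E4 k L x y x z = E3c :=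
    fun x y z a b c => (E3_const a b c h01 h02 h12).trans hE3def
  have he0' : ∀ i j a b : Fin k, i ≠ j → i ≠ a → i ≠ b → j ≠ a → j ≠ b → a ≠ b →
      E4 k L i j a b = e0 := fun i j a b g1 g2 g3 g4 g5 g6 =>
    (E4_const g1 g2 g3 g4 g5 g6 h01 h02 h03 h12 h13 h23).trans he0def
  have hE4aa : ∀ i j a : Fin k, i ≠ j → E4 k L i j a a = n2 := fun i j a h => by
    rw [E4_aa, hE2c i j h]
  have hE4p : ∀ i j : Fin k, i ≠ j → E4 k L i j i j = n2 := fun i j h => by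
    rw [E4_pair, hE2c i j h]
  have hE4p' : ∀ i j : Fin k, i ≠ j → E4 k L i j j i = n2 := fun i j h => by
    rw [E4_pair', hE2c i j h]
  have hE4ib : ∀ i j b : Fin k, i ≠ j → b ≠ i → b ≠ j → E4 k L i j i b = E3c :=
    fun i j b h hbi hbj => hE3 i j b h (Ne.symm hbi) (Ne.symm hbj)
  have hE4jb : ∀ i j b : Fin k, i ≠ j → b ≠ i → b ≠ j → E4 k L i j j b = E3c := by
    intro i j b h hbi hbj
    rw [E4_symm_left]
    exact hE3 j i b (Ne.symm h) (Ne.symm hbj) (Ne.symm hbi)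
  have hE4ai : ∀ i j a : Fin k, i ≠ j → a ≠ i → a ≠ j → E4 k L i j a i = E3c := by
    intro i j a h hai haj
    rw [E4_symm_right]
    exact hE4ib i j a h hai haj
  have hE4aj : ∀ i j a : Fin k, i ≠ j → a ≠ i → a ≠ j → E4 k L i j a j = E3c := by
    intro i j a h hai haj
    rw [E4_symm_left, E4_symm_right]
    exact hE4ib j i a (Ne.symm h) haj hai
  have he1 : ∀ i : Fin k, ∑ j ∈ Finset.univ.erase i, d j = 0 - d i := fun i => by
    rw [sum_erase_sub _ (Finset.mem_univ i), hd0]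
  have he2 : ∀ i : Fin k, ∑ j ∈ Finset.univ.erase i, d j ^ 2 = D - d i ^ 2 := fun i => by
    rw [sum_erase_sub _ (Finset.mem_univ i), hD]
  have he3 : ∀ i : Fin k, ∑ j ∈ Finset.univ.erase i, d j ^ 3 = p3 - d i ^ 3 := fun i => by
    rw [sum_erase_sub _ (Finset.mem_univ i), hp3]
  -- Step A : expand the square and average over colorings
  have stepA : ∑ f ∈ balancedColorings k L, (∑ i, ∑ j, d i * d j * Yb f i j) ^ 2
      = ∑ i, ∑ j, ∑ a, ∑ b, d i * d j * (d a * d b) * E4 k L i j a b := by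
    have h1 : ∀ f : Fin k → Fin L, (∑ i, ∑ j, d i * d j * Yb f i j) ^ 2
        = ∑ i, ∑ j, ∑ a, ∑ b, d i * d j * (d a * d b) * (Yb f i j * Yb f a b) := by
      intro f
      rw [sq]
      simp only [Finset.sum_mul, Finset.mul_sum]
      exact Finset.sum_congr rfl fun i _ => Finset.sum_congr rfl fun j _ =>
        Finset.sum_congr rfl fun a _ => Finset.sum_congr rfl fun b _ => by ring
    rw [Finset.sum_congr rfl fun f _ => h1 f]
    rw [Finset.sum_comm]
    refine Finset.sum_congr rfl fun i _ => ?_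
    rw [Finset.sum_comm]
    refine Finset.sum_congr rfl fun j _ => ?_
    rw [Finset.sum_comm]
    refine Finset.sum_congr rfl fun a _ => ?_
    rw [Finset.sum_comm]
    refine Finset.sum_congr rfl fun b _ => ?_
    unfold E4
    exact (Finset.mul_sum _ _ _).symm
  have stepA2 : ∑ i, ∑ j, ∑ a, ∑ b, d i * d j * (d a * d b) * E4 k L i j a b
      = ∑ i, ∑ j, d i * d j * ∑ a, ∑ b, d a * d b * E4 k L i j a b := by
    refine Finset.sum_congr rfl fun i _ => Finset.sum_congr rfl fun j _ => ?_
    rw [Finset.mul_sum]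
    refine Finset.sum_congr rfl fun a _ => ?_
    rw [Finset.mul_sum]
    exact Finset.sum_congr rfl fun b _ => by ring
  have hKdiag : ∀ i : Fin k, (∑ a, ∑ b, d a * d b * E4 k L i i a b) = (N - n2) * D := by
    intro i
    rw [Finset.sum_congr rfl fun a (_ : a ∈ Finset.univ) =>
      Finset.sum_congr rfl fun b (_ : b ∈ Finset.univ) =>
        (by rw [E4_left_diag] : d a * d b * E4 k L i i a b = d a * d b * E2 k L a b)]
    have h := sum_E2_eval (k := k) (L := L) d hd0 h01
    rw [hN, hn2def, hD] at h
    exact h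
  -- inner double sum for i ≠ j
  have hJ : ∀ i j : Fin k, i ≠ j →
      (∑ a, ∑ b, d a * d b * E4 k L i j a b)
      = n2 * (D + 2 * (d i * d j)) - 2 * E3c * (d i + d j) ^ 2
        + e0 * ((d i + d j) ^ 2 - D + d i ^ 2 + d j ^ 2) := by
    intro i j hij
    have hGi : ∑ b, d i * d b * E4 k L i j i b
        = d i * d i * n2 + d i * d j * n2 + (d i * E3c) * (0 - d i - d j) := by
      rw [← Finset.add_sum_erase _ _ (Finset.mem_univ i)]
      rw [← Finset.add_sum_erase _ _ (Finset.mem_erase.mpr ⟨Ne.symm hij, Finset.mem_univ j⟩)]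
      rw [hE4aa i j i hij, hE4p i j hij]
      have hpt : ∀ b ∈ (Finset.univ.erase i).erase j,
          d i * d b * E4 k L i j i b = (d i * E3c) * d b := by
        intro b hb
        obtain ⟨hbj, hb'⟩ := Finset.mem_erase.mp hb
        obtain ⟨hbi, _⟩ := Finset.mem_erase.mp hb'
        rw [hE4ib i j b hij hbi hbj]; ring
      rw [Finset.sum_congr rfl hpt, ← Finset.mul_sum,
        sum_erase_sub _ (Finset.mem_erase.mpr ⟨Ne.symm hij, Finset.mem_univ j⟩), he1 i]
      ring
    have hGj : ∑ b, d j * d b * E4 k L i j j b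
        = d j * d j * n2 + d j * d i * n2 + (d j * E3c) * (0 - d j - d i) := by
      rw [← Finset.add_sum_erase _ _ (Finset.mem_univ j)]
      rw [← Finset.add_sum_erase _ _ (Finset.mem_erase.mpr ⟨hij, Finset.mem_univ i⟩)]
      rw [hE4aa i j j hij, hE4p' i j hij]
      have hpt : ∀ b ∈ (Finset.univ.erase j).erase i,
          d j * d b * E4 k L i j j b = (d j * E3c) * d b := by
        intro b hb
        obtain ⟨hbi, hb'⟩ := Finset.mem_erase.mp hb
        obtain ⟨hbj, _⟩ := Finset.mem_erase.mp hb'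
        rw [hE4jb i j b hij hbi hbj]; ring
      rw [Finset.sum_congr rfl hpt, ← Finset.mul_sum,
        sum_erase_sub _ (Finset.mem_erase.mpr ⟨hij, Finset.mem_univ i⟩), he1 j]
      ring
    have hGa : ∀ a : Fin k, a ≠ i → a ≠ j → ∑ b, d a * d b * E4 k L i j a b
        = d a * d a * n2 + d a * d i * E3c + d a * d j * E3c
          + (d a * e0) * (0 - d a - d i - d j) := by
      intro a hai haj
      rw [← Finset.add_sum_erase _ _ (Finset.mem_univ a)]
      rw [← Finset.add_sum_erase _ _ (Finset.mem_erase.mpr ⟨Ne.symm hai, Finset.mem_univ i⟩)]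
      rw [← Finset.add_sum_erase _ _ (Finset.mem_erase.mpr
        ⟨Ne.symm hij, Finset.mem_erase.mpr ⟨Ne.symm haj, Finset.mem_univ j⟩⟩)]
      rw [hE4aa i j a hij, hE4ai i j a hij hai haj, hE4aj i j a hij hai haj]
      have hpt : ∀ b ∈ ((Finset.univ.erase a).erase i).erase j,
          d a * d b * E4 k L i j a b = (d a * e0) * d b := by
        intro b hb
        obtain ⟨hbj, hb'⟩ := Finset.mem_erase.mp hb
        obtain ⟨hbi, hb''⟩ := Finset.mem_erase.mp hb'
        obtain ⟨hba, _⟩ := Finset.mem_erase.mp hb''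
        rw [he0' i j a b hij (Ne.symm hai) (Ne.symm hbi) (Ne.symm haj) (Ne.symm hbj)
          (Ne.symm hba)]
        ring
      rw [Finset.sum_congr rfl hpt, ← Finset.mul_sum,
        sum_erase_sub _ (Finset.mem_erase.mpr
          ⟨Ne.symm hij, Finset.mem_erase.mpr ⟨Ne.symm haj, Finset.mem_univ j⟩⟩),
        sum_erase_sub _ (Finset.mem_erase.mpr ⟨Ne.symm hai, Finset.mem_univ i⟩), he1 a]
      ring
    rw [← Finset.add_sum_erase _ _ (Finset.mem_univ i)]
    rw [← Finset.add_sum_erase _ _ (Finset.mem_erase.mpr ⟨Ne.symm hij, Finset.mem_univ j⟩)]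
    rw [hGi, hGj]
    have hpt : ∀ a ∈ (Finset.univ.erase i).erase j,
        (∑ b, d a * d b * E4 k L i j a b)
        = (n2 - e0) * d a ^ 2 + (E3c * (d i + d j) + e0 * (0 - d i - d j)) * d a := by
      intro a ha
      obtain ⟨haj, ha'⟩ := Finset.mem_erase.mp ha
      obtain ⟨hai, _⟩ := Finset.mem_erase.mp ha'
      rw [hGa a hai haj]; ring
    rw [Finset.sum_congr rfl hpt, Finset.sum_add_distrib, ← Finset.mul_sum, ← Finset.mul_sum]
    rw [sum_erase_sub _ (Finset.mem_erase.mpr ⟨Ne.symm hij, Finset.mem_univ j⟩) (fun a => d a ^ 2),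
      he2 i]
    rw [sum_erase_sub _ (Finset.mem_erase.mpr ⟨Ne.symm hij, Finset.mem_univ j⟩) d, he1 i]
    ring
  have houter : ∀ i : Fin k, (∑ j, d i * d j * ∑ a, ∑ b, d a * d b * E4 k L i j a b)
      = d i * d i * ((N - n2) * D) + ((n2 * D - e0 * D) * d i) * (0 - d i)
        + ((2 * n2 - 4 * E3c + 2 * e0) * d i ^ 2) * (D - d i ^ 2)
        + ((2 * e0 - 2 * E3c) * d i ^ 3) * (0 - d i)
        + ((2 * e0 - 2 * E3c) * d i) * (p3 - d i ^ 3) := by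
    intro i
    rw [← Finset.add_sum_erase _ _ (Finset.mem_univ i), hKdiag i]
    have hpt : ∀ j ∈ Finset.univ.erase i,
        d i * d j * (∑ a, ∑ b, d a * d b * E4 k L i j a b)
        = ((n2 * D - e0 * D) * d i) * d j + ((2 * n2 - 4 * E3c + 2 * e0) * d i ^ 2) * d j ^ 2
          + ((2 * e0 - 2 * E3c) * d i ^ 3) * d j + ((2 * e0 - 2 * E3c) * d i) * d j ^ 3 := by
      intro j hj
      rw [hJ i j (Ne.symm (Finset.ne_of_mem_erase hj))]
      ring
    rw [Finset.sum_congr rfl hpt, Finset.sum_add_distrib, Finset.sum_add_distrib,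
      Finset.sum_add_distrib, ← Finset.mul_sum, ← Finset.mul_sum, ← Finset.mul_sum,
      ← Finset.mul_sum, he1 i, he2 i, he3 i]
    ring
  have hp4D : p4 ≤ D ^ 2 := by
    have hDd : ∀ i : Fin k, d i ^ 2 ≤ D := by
      intro i
      rw [← hD]
      exact Finset.single_le_sum (fun j _ => sq_nonneg (d j)) (Finset.mem_univ i)
    have h1 : ∀ i : Fin k, d i ^ 4 ≤ d i ^ 2 * D := by
      intro i
      nlinarith [hDd i, sq_nonneg (d i)]
    calc p4 = ∑ i, d i ^ 4 := hp4.symm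
      _ ≤ ∑ i, d i ^ 2 * D := Finset.sum_le_sum fun i _ => h1 i
      _ = (∑ i, d i ^ 2) * D := by rw [Finset.sum_mul]
      _ = D * D := by rw [hD]
      _ = D ^ 2 := by ring
  have hp4n : 0 ≤ p4 := by
    rw [← hp4]
    exact Finset.sum_nonneg fun i _ => by positivity
  have hDn : 0 ≤ D := by
    rw [← hD]
    exact Finset.sum_nonneg fun i _ => sq_nonneg _
  have hNn : (0 : ℝ) ≤ N := by rw [← hN]; exact Nat.cast_nonneg _
  have hn2n : 0 ≤ n2 := hn2def ▸ E2_nonneg z0 z1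
  have hE3n : 0 ≤ E3c := hE3def ▸ E4_nonneg z0 z1 z0 z2
  have hE3N : E3c ≤ N := hE3def ▸ hN ▸ E4_le z0 z1 z0 z2
  have he0n : 0 ≤ e0 := he0def ▸ E4_nonneg z0 z1 z2 z3
  have he0N : e0 ≤ N := he0def ▸ hN ▸ E4_le z0 z1 z2 z3
  calc ∑ f ∈ balancedColorings k L, (∑ i, ∑ j, d i * d j * Yb f i j) ^ 2
      = ∑ i, ((N * D + 3 * e0 * D - 4 * E3c * D) * d i ^ 2
          + (8 * E3c - 2 * n2 - 6 * e0) * d i ^ 4 + ((2 * e0 - 2 * E3c) * p3) * d i) := by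
        rw [stepA, stepA2]
        refine Finset.sum_congr rfl fun i _ => ?_
        rw [houter i]
        ring
    _ = (N * D + 3 * e0 * D - 4 * E3c * D) * D + (8 * E3c - 2 * n2 - 6 * e0) * p4
          + ((2 * e0 - 2 * E3c) * p3) * 0 := by
        rw [Finset.sum_add_distrib, Finset.sum_add_distrib, ← Finset.mul_sum, ← Finset.mul_sum,
          ← Finset.mul_sum, hD, hp4, hd0]
    _ ≤ 8 * N * D ^ 2 := by
        nlinarith [mul_nonneg he0n hp4n, mul_nonneg hn2n hp4n,
          mul_nonneg (sub_nonneg.mpr hE3N) (sub_nonneg.mpr hp4D),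
          mul_nonneg (sub_nonneg.mpr he0N) (mul_nonneg hDn hDn),
          mul_nonneg hE3n (sub_nonneg.mpr hp4D), mul_nonneg (sub_nonneg.mpr hE3N) hp4n]

lemma sq_fiber_sum (f : Fin k → Fin L) (d : Fin k → ℝ) :
    ∑ r, (∑ i ∈ Finset.univ.filter (fun i => f i = r), d i) ^ 2
      = ∑ i, ∑ j, d i * d j * Yb f i j := by
  have h1 : ∀ r : Fin L, (∑ i ∈ Finset.univ.filter (fun i => f i = r), d i)
      = ∑ i, if f i = r then d i else 0 := fun r => Finset.sum_filter _ _
  calc ∑ r, (∑ i ∈ Finset.univ.filter (fun i => f i = r), d i) ^ 2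
      = ∑ r, ∑ i, ∑ j, (if f i = r then d i else 0) * (if f j = r then d j else 0) := by
        refine Finset.sum_congr rfl fun r _ => ?_
        rw [h1 r, sq, Finset.sum_mul_sum]
    _ = ∑ i, ∑ j, ∑ r, (if f i = r then d i else 0) * (if f j = r then d j else 0) := by
        rw [Finset.sum_comm]
        exact Finset.sum_congr rfl fun i _ => Finset.sum_comm
    _ = ∑ i, ∑ j, d i * d j * Yb f i j := by
        refine Finset.sum_congr rfl fun i _ => Finset.sum_congr rfl fun j _ => ?_
        unfold Yb
        by_cases h : f i = f j
        · rw [if_pos h]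
          have hpt : ∀ r : Fin L, (if f i = r then d i else 0) * (if f j = r then d j else 0)
              = if f i = r then d i * d j else 0 := by
            intro r
            by_cases hr : f i = r
            · rw [if_pos hr, if_pos ((h.symm.trans hr : f j = r)), if_pos hr]
            · rw [if_neg hr, if_neg hr, zero_mul]
          rw [Finset.sum_congr rfl fun r _ => hpt r, Finset.sum_ite_eq]
          simp
        · rw [if_neg h]
          have hpt : ∀ r : Fin L, (if f i = r then d i else 0) * (if f j = r then d j else 0)
              = 0 := by
            intro r
            by_cases hr : f i = r
            · rw [if_neg (fun hh : f j = r => h (hr.trans hh.symm)), mul_zero]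
            · rw [if_neg hr, zero_mul]
          rw [Finset.sum_congr rfl fun r _ => hpt r, Finset.sum_const_zero, mul_zero]

lemma partSum_sub (hL : 0 < L) (hk : 0 < k) (hdvd : L ∣ k) {f : Fin k → Fin L}
    (hf : f ∈ balancedColorings k L) (p : Fin k → ℝ) (r : Fin L) :
    partSum p f r - 1 / L = ∑ i ∈ Finset.univ.filter (fun i => f i = r), (p i - 1 / k) := by
  have hcard := mem_balanced_iff.mp hf r
  have hmL : ((k / L : ℕ) : ℝ) * (L : ℝ) = (k : ℝ) := by exact_mod_cast Nat.div_mul_cancel hdvd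
  have hkR : (0 : ℝ) < (k : ℝ) := by exact_mod_cast hk
  have hLR : (0 : ℝ) < (L : ℝ) := by exact_mod_cast hL
  rw [Finset.sum_sub_distrib, Finset.sum_const, hcard, nsmul_eq_mul]
  unfold partSum
  have : ((k / L : ℕ) : ℝ) * (1 / (k : ℝ)) = 1 / (L : ℝ) := by
    field_simp
    linarith [hmL]
  rw [this]

end RFPD

set_option maxHeartbeats 1600000 in
/-- There is an absolute constant `c > 0` such that for all `2 ≤ L < k` with `L ∣ k`,
`ε ∈ (0,1]`, and every distribution `p` on `[k]`, with `q` the distribution on `[L]` induced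
by a uniformly random balanced `L`-coloring:
(i) if `p` is uniform then `q` is uniform for every balanced coloring, and
(ii) if `∑ |p_i − 1/k| > ε` then `∑_r (q_r − 1/L)² > ε²/(4k)` with probability at least `c`. -/
theorem random_flattening_preserves_distance :
    ∃ c : ℝ, 0 < c ∧
      ∀ (k L : ℕ) (ε : ℝ), 2 ≤ L → L < k → L ∣ k → 0 < ε → ε ≤ 1 →
        ∀ p : Fin k → ℝ, (∀ i, 0 ≤ p i) → (∑ i, p i = 1) →
          ((∀ i, p i = 1 / k) →
            ∀ f ∈ balancedColorings k L, ∀ r : Fin L, partSum p f r = 1 / L)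
          ∧ ((∑ i, |p i - 1 / k|) > ε →
              c ≤ (((balancedColorings k L).filter fun f =>
                      (∑ r, (partSum p f r - 1 / L) ^ 2) > ε ^ 2 / (4 * k)).card : ℝ)
                  / ((balancedColorings k L).card : ℝ)) := by
  refine ⟨1/128, by norm_num, ?_⟩
  intro k L ε hL hLk hdvd hε hε1 p hp hsum
  have hk0 : 0 < k := by omega
  have hL0 : 0 < L := by omega
  have hkR : (0:ℝ) < (k:ℝ) := by exact_mod_cast hk0
  have hLR : (0:ℝ) < (L:ℝ) := by exact_mod_cast hL0
  have hmL : ((k / L : ℕ) : ℝ) * (L : ℝ) = (k : ℝ) := by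
    exact_mod_cast Nat.div_mul_cancel hdvd
  constructor
  · intro hunif f hf r
    have hcard := RFPD.mem_balanced_iff.mp hf r
    unfold partSum
    rw [Finset.sum_congr rfl fun i _ => hunif i, Finset.sum_const, hcard, nsmul_eq_mul]
    field_simp
    linarith [hmL]
  · intro hfar
    have hd0 : ∑ i, (p i - 1/(k:ℝ)) = 0 := by
      rw [Finset.sum_sub_distrib, hsum, Finset.sum_const, Finset.card_univ, Fintype.card_fin,
        nsmul_eq_mul]
      field_simp
      norm_num
    have hDlb : ε^2 / (k:ℝ) < ∑ i, (p i - 1/(k:ℝ))^2 := by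
      have hcs := Finset.sum_mul_sq_le_sq_mul_sq Finset.univ
        (fun i => |p i - 1/(k:ℝ)|) (fun _ => (1:ℝ))
      simp only [mul_one, one_pow, sq_abs] at hcs
      rw [Finset.sum_const, Finset.card_univ, Fintype.card_fin, nsmul_eq_mul, mul_one] at hcs
      have h2 : ε^2 < (∑ i, |p i - 1/(k:ℝ)|)^2 := by
        nlinarith [hfar, hε]
      rw [div_lt_iff₀ hkR]
      nlinarith [hcs, h2]
    have hne := RFPD.balanced_nonempty hL0 hdvd
    have hNpos : (0:ℝ) < ((balancedColorings k L).card : ℝ) := by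
      exact_mod_cast Finset.card_pos.mpr hne
    have hDpos : (0:ℝ) < ∑ i, (p i - 1/(k:ℝ))^2 := lt_trans (by positivity) hDlb
    have hS : ∀ f ∈ balancedColorings k L,
        (∑ r, (partSum p f r - 1/(L:ℝ))^2)
        = ∑ i, ∑ j, (p i - 1/(k:ℝ)) * (p j - 1/(k:ℝ)) * RFPD.Yb f i j := by
      intro f hf
      rw [Finset.sum_congr rfl fun r (_ : r ∈ Finset.univ) =>
        congrArg (· ^ 2) (RFPD.partSum_sub hL0 hk0 hdvd hf p r)]
      exact RFPD.sq_fiber_sum f _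
    have hlow := RFPD.first_moment hL hLk hdvd (fun i => p i - 1/(k:ℝ)) hd0
    have hup := RFPD.second_moment hL hLk hdvd (fun i => p i - 1/(k:ℝ)) hd0
    have hlow' : ((balancedColorings k L).card : ℝ) * (∑ i, (p i - 1/(k:ℝ))^2) / 2
        ≤ ∑ f ∈ balancedColorings k L, ∑ r, (partSum p f r - 1/(L:ℝ))^2 := by
      rw [Finset.sum_congr rfl hS]
      exact hlow
    have hup' : ∑ f ∈ balancedColorings k L, (∑ r, (partSum p f r - 1/(L:ℝ))^2)^2
        ≤ 8 * ((balancedColorings k L).card : ℝ) * (∑ i, (p i - 1/(k:ℝ))^2)^2 := by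
      rw [Finset.sum_congr rfl fun f hf => congrArg (· ^ 2) (hS f hf)]
      exact hup
    have hsplit := Finset.sum_filter_add_sum_filter_not (balancedColorings k L)
      (fun f => (∑ r, (partSum p f r - 1/(L:ℝ))^2) > ε^2/(4*(k:ℝ)))
      (fun f => ∑ r, (partSum p f r - 1/(L:ℝ))^2)
    have hnot : ∑ f ∈ (balancedColorings k L).filter
        (fun f => ¬((∑ r, (partSum p f r - 1/(L:ℝ))^2) > ε^2/(4*(k:ℝ)))),
          (∑ r, (partSum p f r - 1/(L:ℝ))^2)
        ≤ ((balancedColorings k L).card : ℝ) * (ε^2/(4*(k:ℝ))) := by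
      have ht0 : (0:ℝ) ≤ ε^2/(4*(k:ℝ)) := by positivity
      calc ∑ f ∈ (balancedColorings k L).filter
            (fun f => ¬((∑ r, (partSum p f r - 1/(L:ℝ))^2) > ε^2/(4*(k:ℝ)))),
              (∑ r, (partSum p f r - 1/(L:ℝ))^2)
          ≤ ∑ _f ∈ (balancedColorings k L).filter
            (fun f => ¬((∑ r, (partSum p f r - 1/(L:ℝ))^2) > ε^2/(4*(k:ℝ)))),
              (ε^2/(4*(k:ℝ))) :=
            Finset.sum_le_sum fun f hf => le_of_not_gt (Finset.mem_filter.mp hf).2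
        _ = (((balancedColorings k L).filter
            (fun f => ¬((∑ r, (partSum p f r - 1/(L:ℝ))^2) > ε^2/(4*(k:ℝ))))).card : ℝ)
              * (ε^2/(4*(k:ℝ))) := by
            rw [Finset.sum_const, nsmul_eq_mul]
        _ ≤ ((balancedColorings k L).card : ℝ) * (ε^2/(4*(k:ℝ))) := by
            refine mul_le_mul_of_nonneg_right ?_ ht0
            exact_mod_cast Finset.card_le_card (Finset.filter_subset _ _)
    have hNt : ((balancedColorings k L).card : ℝ) * (ε^2/(4*(k:ℝ)))
        ≤ ((balancedColorings k L).card : ℝ) * ((∑ i, (p i - 1/(k:ℝ))^2)/4) := by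
      refine mul_le_mul_of_nonneg_left ?_ hNpos.le
      have : ε^2/(4*(k:ℝ)) = (ε^2/(k:ℝ))/4 := by ring
      rw [this]
      linarith [hDlb]
    have hApos : ((balancedColorings k L).card : ℝ) * (∑ i, (p i - 1/(k:ℝ))^2) / 4
        ≤ ∑ f ∈ (balancedColorings k L).filter
            (fun f => (∑ r, (partSum p f r - 1/(L:ℝ))^2) > ε^2/(4*(k:ℝ))),
          (∑ r, (partSum p f r - 1/(L:ℝ))^2) := by
      linarith [hlow', hsplit, hnot, hNt]
    have hcs2 : (∑ f ∈ (balancedColorings k L).filter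
            (fun f => (∑ r, (partSum p f r - 1/(L:ℝ))^2) > ε^2/(4*(k:ℝ))),
          (∑ r, (partSum p f r - 1/(L:ℝ))^2))^2
        ≤ ((((balancedColorings k L).filter
            (fun f => (∑ r, (partSum p f r - 1/(L:ℝ))^2) > ε^2/(4*(k:ℝ)))).card : ℝ)
          * ∑ f ∈ (balancedColorings k L).filter
            (fun f => (∑ r, (partSum p f r - 1/(L:ℝ))^2) > ε^2/(4*(k:ℝ))),
          (∑ r, (partSum p f r - 1/(L:ℝ))^2)^2) := by
      exact sq_sum_le_card_mul_sum_sq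
    have hsub : ∑ f ∈ (balancedColorings k L).filter
            (fun f => (∑ r, (partSum p f r - 1/(L:ℝ))^2) > ε^2/(4*(k:ℝ))),
          (∑ r, (partSum p f r - 1/(L:ℝ))^2)^2
        ≤ ∑ f ∈ balancedColorings k L, (∑ r, (partSum p f r - 1/(L:ℝ))^2)^2 :=
      Finset.sum_le_sum_of_subset_of_nonneg (Finset.filter_subset _ _)
        (fun f _ _ => sq_nonneg _)
    have hcard0 : (0:ℝ) ≤ (((balancedColorings k L).filter
        (fun f => (∑ r, (partSum p f r - 1/(L:ℝ))^2) > ε^2/(4*(k:ℝ)))).card : ℝ) :=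
      Nat.cast_nonneg _
    have hfinal : (((balancedColorings k L).card : ℝ) * (∑ i, (p i - 1/(k:ℝ))^2) / 4)^2
        ≤ (((balancedColorings k L).filter
            (fun f => (∑ r, (partSum p f r - 1/(L:ℝ))^2) > ε^2/(4*(k:ℝ)))).card : ℝ)
          * (8 * ((balancedColorings k L).card : ℝ) * (∑ i, (p i - 1/(k:ℝ))^2)^2) := by
      have h0 : (0:ℝ) ≤ ((balancedColorings k L).card : ℝ) * (∑ i, (p i - 1/(k:ℝ))^2) / 4 := by
        positivity
      calc (((balancedColorings k L).card : ℝ) * (∑ i, (p i - 1/(k:ℝ))^2) / 4)^2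
          ≤ (∑ f ∈ (balancedColorings k L).filter
              (fun f => (∑ r, (partSum p f r - 1/(L:ℝ))^2) > ε^2/(4*(k:ℝ))),
            (∑ r, (partSum p f r - 1/(L:ℝ))^2))^2 := by nlinarith [hApos, h0]
        _ ≤ _ := hcs2
        _ ≤ _ := by
            refine mul_le_mul_of_nonneg_left (le_trans hsub hup') hcard0
    rw [le_div_iff₀ hNpos]
    nlinarith [hfinal, hNpos, hDpos,
      mul_pos hNpos (mul_pos hDpos hDpos), mul_pos hDpos hDpos]
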